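/- Let (Ω,F,P) be a complete probability space, (E,B(E)) a measurable space arising from a topological space E, X : [0,∞) → Ω → E a stochastic process such that the map (ω,t) ↦ X_t(ω) is F ⊗ B([0,∞))/B(E)-measurable, and let each atomic proposition a ∈ AP be assigned a Borel set B_a ⊆ E. Then for every MTL formula φ, the set ⟦φ⟧ := {(ω,t) : X(ω),t ⊨ φ} belongs to F ⊗ B([0,∞)), and for every t ∈ [0,∞) the set ⟦φ⟧(t) := {ω : X(ω),t ⊨ φ} belongs to F. -/

import Mathlib

open MeasureTheory
open scoped NNReal ENNReal Topology

/-- Syntax of MTL formulas over atomic propositions `AP`: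
`φ ::= a | ¬φ | φ₁ ∧ φ₂ | φ₁ U_I φ₂` where `I` is a subset of `[0,∞)`. -/
inductive MTL (AP : Type*) : Type _ where
  | atom : AP → MTL AP
  | not : MTL AP → MTL AP
  | and : MTL AP → MTL AP → MTL AP
  | untl : MTL AP → MTL AP → Set ℝ≥0 → MTL AP

/-- The requirement that all the index sets occurring in until operators are intervals. -/
def MTL.intervalsOK {AP : Type*} : MTL AP → Prop
  | MTL.atom _ => True
  | MTL.not φ => φ.intervalsOK
  | MTL.and φ ψ => φ.intervalsOK ∧ ψ.intervalsOK
  | MTL.untl φ ψ I => I.OrdConnected ∧ φ.intervalsOK ∧ ψ.intervalsOK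

/-- Continuous-time semantics of MTL along the path `t ↦ X_t(ω)`, where the atomic
proposition `a` is interpreted by the set `V a`. -/
def MTL.Sat {Ω E AP : Type*} (X : ℝ≥0 → Ω → E) (V : AP → Set E) :
    MTL AP → Ω → ℝ≥0 → Prop
  | MTL.atom a => fun ω t => X t ω ∈ V a
  | MTL.not φ => fun ω t => ¬ φ.Sat X V ω t
  | MTL.and φ ψ => fun ω t => φ.Sat X V ω t ∧ ψ.Sat X V ω t
  | MTL.untl φ ψ I => fun ω t => ∃ s ∈ I, ψ.Sat X V ω (t + s) ∧
      ∀ s' : ℝ≥0, t ≤ s' → s' < t + s → φ.Sat X V ω s'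

namespace StmtAux
open MeasureTheory Set
open scoped NNReal ENNReal


variable {Ω : Type*} [MeasurableSpace Ω]

def pre (σ : ℕ → ℕ) (n : ℕ) : List ℕ := (List.range n).map σ

lemma pre_zero (σ : ℕ → ℕ) : pre σ 0 = [] := rfl

lemma pre_succ (σ : ℕ → ℕ) (n : ℕ) : pre σ (n + 1) = pre σ n ++ [σ n] := by
  simp [pre, List.range_succ]

lemma pre_succ' (σ : ℕ → ℕ) (n : ℕ) :
    pre σ (n + 1) = σ 0 :: pre (σ ∘ Nat.succ) n := by
  simp [pre, List.range_succ_eq_map, List.map_map]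

lemma pre_length (σ : ℕ → ℕ) (n : ℕ) : (pre σ n).length = n := by simp [pre]

lemma pre_take (σ : ℕ → ℕ) {m n : ℕ} (h : n ≤ m) : (pre σ m).take n = pre σ n := by
  simp [pre, ← List.map_take, List.take_range, Nat.min_eq_left h]

/-- The Suslin operation. -/
def Sus (u : List ℕ → Set Ω) : Set Ω := ⋃ σ : ℕ → ℕ, ⋂ n, u (pre σ n)

/-- Tail sets of the Suslin operation. -/
def tail (u : List ℕ → Set Ω) (s : List ℕ) : Set Ω :=
  ⋃ τ : ℕ → ℕ, ⋂ n, u (s ++ pre τ n)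

lemma tail_nil (u : List ℕ → Set Ω) : tail u [] = Sus u := by
  simp [tail, Sus]

lemma tail_subset_u (u : List ℕ → Set Ω) (s : List ℕ) : tail u s ⊆ u s := by
  intro ω hω
  rcases mem_iUnion.1 hω with ⟨τ, hτ⟩
  have := mem_iInter.1 hτ 0
  simpa [pre_zero] using this

section

variable {u : List ℕ → Set Ω} (hmono : ∀ s k, u (s ++ [k]) ⊆ u s)

include hmono

lemma tail_snoc_subset (s : List ℕ) (k : ℕ) : tail u (s ++ [k]) ⊆ tail u s := by
  intro ω hω
  rcases mem_iUnion.1 hω with ⟨τ, hτ⟩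
  have hτ' := mem_iInter.1 hτ
  refine mem_iUnion.2 ⟨fun n => Nat.casesOn n k τ, mem_iInter.2 fun n => ?_⟩
  cases n with
  | zero =>
      have h0 := hτ' 0
      simp only [pre_zero, List.append_nil] at h0 ⊢
      exact hmono s k h0
  | succ m =>
      have hm := hτ' m
      have : pre (fun n => Nat.casesOn n k τ) (m + 1) = k :: pre τ m := by
        rw [pre_succ']
        rfl
      rw [this, List.append_cons]
      exact hm

lemma tail_eq_iUnion (s : List ℕ) : tail u s = ⋃ k, tail u (s ++ [k]) := by
  apply Subset.antisymm
  · intro ω hω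
    rcases mem_iUnion.1 hω with ⟨τ, hτ⟩
    have hτ' := mem_iInter.1 hτ
    refine mem_iUnion.2 ⟨τ 0, mem_iUnion.2 ⟨τ ∘ Nat.succ, mem_iInter.2 fun n => ?_⟩⟩
    have hm := hτ' (n + 1)
    rw [pre_succ'] at hm
    rw [← List.append_cons]
    exact hm
  · exact iUnion_subset fun k => tail_snoc_subset hmono s k

lemma tail_append_subset (s t : List ℕ) : tail u (s ++ t) ⊆ tail u s := by
  induction t using List.reverseRecOn with
  | nil => simp
  | append_singleton t k ih =>
      calc tail u (s ++ (t ++ [k])) = tail u ((s ++ t) ++ [k]) := by rw [List.append_assoc]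
        _ ⊆ tail u (s ++ t) := tail_snoc_subset hmono _ k
        _ ⊆ tail u s := ih

lemma tail_take_subset (s : List ℕ) (n : ℕ) : tail u s ⊆ tail u (s.take n) := by
  conv_lhs => rw [← List.take_append_drop n s]
  exact tail_append_subset hmono _ _

end

section Marczewski

variable (Pm : Measure Ω) (u : List ℕ → Set Ω)

/-- Measurable hulls along prefixes. -/
def Hm (s : List ℕ) : Set Ω :=
  ⋂ n, ⋂ (_ : n ≤ s.length), (toMeasurable Pm (tail u (s.take n)) ∩ u (s.take n))

variable {Pm u}

lemma measurableSet_Hm (hu : ∀ s, MeasurableSet (u s)) (s : List ℕ) :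
    MeasurableSet (Hm Pm u s) :=
  MeasurableSet.iInter fun _ => MeasurableSet.iInter fun _ =>
    (measurableSet_toMeasurable _ _).inter (hu _)

lemma tail_subset_Hm (hmono : ∀ s k, u (s ++ [k]) ⊆ u s) (s : List ℕ) :
    tail u s ⊆ Hm Pm u s := by
  intro ω hω
  refine mem_iInter.2 fun n => mem_iInter.2 fun hn => ?_
  have h1 : ω ∈ tail u (s.take n) := tail_take_subset hmono s n hω
  exact ⟨subset_toMeasurable _ _ h1, tail_subset_u u _ h1⟩

lemma Hm_subset_u (s : List ℕ) : Hm Pm u s ⊆ u s := by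
  intro ω hω
  have := mem_iInter.1 (mem_iInter.1 hω s.length) le_rfl
  simpa [List.take_length] using this.2

lemma Hm_subset_toMeasurable (s : List ℕ) :
    Hm Pm u s ⊆ toMeasurable Pm (tail u s) := by
  intro ω hω
  have := mem_iInter.1 (mem_iInter.1 hω s.length) le_rfl
  simpa [List.take_length] using this.1

lemma Hm_snoc_subset (s : List ℕ) (k : ℕ) : Hm Pm u (s ++ [k]) ⊆ Hm Pm u s := by
  intro ω hω
  refine mem_iInter.2 fun n => mem_iInter.2 fun hn => ?_
  have hn' : n ≤ (s ++ [k]).length := by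
    simp only [List.length_append, List.length_singleton]; omega
  have := mem_iInter.1 (mem_iInter.1 hω n) hn'
  rwa [List.take_append_of_le_length hn] at this

lemma measure_Hm (hmono : ∀ s k, u (s ++ [k]) ⊆ u s) (s : List ℕ) :
    Pm (Hm Pm u s) = Pm (tail u s) := by
  refine le_antisymm ?_ (measure_mono (tail_subset_Hm hmono s))
  calc Pm (Hm Pm u s) ≤ Pm (toMeasurable Pm (tail u s)) :=
        measure_mono (Hm_subset_toMeasurable s)
    _ = Pm (tail u s) := measure_toMeasurable _

lemma measure_Hm_diff [IsFiniteMeasure Pm] (hu : ∀ s, MeasurableSet (u s))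
    (hmono : ∀ s k, u (s ++ [k]) ⊆ u s) (s : List ℕ) :
    Pm (Hm Pm u s \ ⋃ k, Hm Pm u (s ++ [k])) = 0 := by
  set G := ⋃ k, Hm Pm u (s ++ [k]) with hG
  have hGm : MeasurableSet G := MeasurableSet.iUnion fun k => measurableSet_Hm hu _
  have hsub : tail u s ⊆ G ∩ Hm Pm u s := by
    intro ω hω
    refine ⟨?_, tail_subset_Hm hmono s hω⟩
    rw [tail_eq_iUnion hmono] at hω
    rcases mem_iUnion.1 hω with ⟨k, hk⟩
    exact mem_iUnion.2 ⟨k, tail_subset_Hm hmono _ hk⟩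
  have hle : Pm (Hm Pm u s) ≤ Pm (G ∩ Hm Pm u s) := by
    rw [measure_Hm hmono s]
    exact measure_mono hsub
  have h1 : Hm Pm u s \ G = Hm Pm u s \ (G ∩ Hm Pm u s) :=
    (Set.diff_inter_self_eq_diff).symm
  rw [h1, measure_diff inter_subset_right
    ((hGm.inter (measurableSet_Hm hu s)).nullMeasurableSet) (measure_ne_top _ _)]
  exact tsub_eq_zero_of_le hle

/-- Marczewski: the Suslin operation preserves measurability for a complete finite measure. -/
theorem measurableSet_sus [IsFiniteMeasure Pm] [Pm.IsComplete]
    (hu : ∀ s, MeasurableSet (u s)) (hmono : ∀ s k, u (s ++ [k]) ⊆ u s) :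
    MeasurableSet (Sus u) := by
  set N := ⋃ s : List ℕ, (Hm Pm u s \ ⋃ k, Hm Pm u (s ++ [k])) with hN
  have hNnull : Pm N = 0 :=
    measure_iUnion_null fun s => measure_Hm_diff hu hmono s
  have hNm : MeasurableSet N :=
    MeasurableSet.iUnion fun s =>
      (measurableSet_Hm hu s).diff (MeasurableSet.iUnion fun k => measurableSet_Hm hu _)
  have claim1 : Hm Pm u [] \ N ⊆ Sus u := by
    intro ω hω
    obtain ⟨hω0, hωN⟩ := hω
    have step : ∀ s : List ℕ, ω ∈ Hm Pm u s → ∃ k, ω ∈ Hm Pm u (s ++ [k]) := by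
      intro s hs
      by_contra h
      push_neg at h
      exact hωN (mem_iUnion.2 ⟨s, hs, by simpa using h⟩)
    let F : ℕ → {s : List ℕ // ω ∈ Hm Pm u s} := fun n =>
      Nat.rec ⟨[], hω0⟩
        (fun _ p => ⟨p.1 ++ [Classical.choose (step p.1 p.2)],
          Classical.choose_spec (step p.1 p.2)⟩) n
    let σ : ℕ → ℕ := fun n => Classical.choose (step (F n).1 (F n).2)
    have hF : ∀ n, (F (n + 1)).1 = (F n).1 ++ [σ n] := fun n => rfl
    have hpre : ∀ n, (F n).1 = pre σ n := by
      intro n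
      induction n with
      | zero => rfl
      | succ m ih => rw [hF m, ih, pre_succ]
    refine mem_iUnion.2 ⟨σ, mem_iInter.2 fun n => ?_⟩
    have := (F n).2
    rw [hpre n] at this
    exact Hm_subset_u _ this
  have claim2 : Sus u ⊆ Hm Pm u [] := by
    rw [← tail_nil]
    exact tail_subset_Hm hmono []
  have hdecomp : Sus u = (Hm Pm u [] \ N) ∪ (Sus u ∩ N) := by
    apply Subset.antisymm
    · intro x hx
      by_cases hxN : x ∈ N
      · exact Or.inr ⟨hx, hxN⟩
      · exact Or.inl ⟨claim2 hx, hxN⟩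
    · rintro x (hx | hx)
      · exact claim1 hx
      · exact hx.1
  rw [hdecomp]
  exact ((measurableSet_Hm hu []).diff hNm).union
    (measurableSet_of_null (measure_mono_null inter_subset_right hNnull))

end Marczewski


section Paving

variable {Ω : Type*} [MeasurableSpace Ω]

/-- The paving of measurable rectangles with compact (or full) second factor. -/
def Pav (T : Set (Ω × ℝ≥0)) : Prop :=
  ∃ A C, MeasurableSet A ∧ IsClosed C ∧ (IsCompact C ∨ C = univ) ∧ T = A ×ˢ C

lemma Pav.univ : Pav (univ : Set (Ω × ℝ≥0)) :=
  ⟨Set.univ, Set.univ, MeasurableSet.univ, isClosed_univ, Or.inr rfl, (univ_prod_univ).symm⟩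

lemma Pav.empty : Pav (∅ : Set (Ω × ℝ≥0)) :=
  ⟨∅, ∅, MeasurableSet.empty, isClosed_empty, Or.inl isCompact_empty, by simp⟩

lemma Pav.inter {S T : Set (Ω × ℝ≥0)} (hS : Pav S) (hT : Pav T) : Pav (S ∩ T) := by
  obtain ⟨A, C, hA, hC, hCc, rfl⟩ := hS
  obtain ⟨A', C', hA', hC', hCc', rfl⟩ := hT
  refine ⟨A ∩ A', C ∩ C', hA.inter hA', hC.inter hC', ?_, prod_inter_prod⟩
  rcases hCc with h | h
  · exact Or.inl (h.inter_right hC')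
  · rcases hCc' with h' | h'
    · exact Or.inl (h'.inter_left hC)
    · exact Or.inr (by rw [h, h', univ_inter])

lemma Pav.measurableSet {T : Set (Ω × ℝ≥0)} (hT : Pav T) : MeasurableSet T := by
  obtain ⟨A, C, hA, hC, _, rfl⟩ := hT
  exact hA.prod hC.measurableSet

lemma Pav.biInter_finset {ι : Type*} {f : ι → Set (Ω × ℝ≥0)} (F : Finset ι)
    (hf : ∀ i ∈ F, Pav (f i)) : Pav (⋂ i ∈ F, f i) := by
  classical
  induction F using Finset.induction_on with
  | empty => simpa using Pav.univ
  | @insert a F ha ih =>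
      rw [Finset.set_biInter_insert]
      exact (hf _ (Finset.mem_insert_self _ _)).inter
        (ih fun i hi => hf i (Finset.mem_insert_of_mem hi))

/-- Well-behaved Suslin schemes. -/
def Good (u : List ℕ → Set (Ω × ℝ≥0)) : Prop :=
  (∀ s, Pav (u s)) ∧ (∀ s k, u (s ++ [k]) ⊆ u s) ∧ u [] = univ

/-- Sets obtained from the paving by the Suslin operation. -/
def SusSet (S : Set (Ω × ℝ≥0)) : Prop := ∃ u, Good u ∧ S = Sus u

lemma SusSet.of_pav {T : Set (Ω × ℝ≥0)} (hT : Pav T) : SusSet T := by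
  refine ⟨fun s => if s = [] then univ else T, ⟨?_, ?_, if_pos rfl⟩, ?_⟩
  · intro s; by_cases h : s = [] <;> simp [h, hT, Pav.univ]
  · intro s k
    by_cases h : s = [] <;> simp [h]
  · ext x
    simp only [Sus, mem_iUnion, mem_iInter]
    constructor
    · intro hx
      refine ⟨fun _ => 0, fun n => ?_⟩
      by_cases h : pre (fun _ => 0) n = [] <;> simp [h, hx]
    · rintro ⟨σ, hσ⟩
      have := hσ 1
      rwa [if_neg (by simp [pre, List.range_succ])] at this

lemma susSet_univ : SusSet (univ : Set (Ω × ℝ≥0)) := SusSet.of_pav Pav.univ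

lemma susSet_empty : SusSet (∅ : Set (Ω × ℝ≥0)) := SusSet.of_pav Pav.empty

lemma susSet_iUnion {f : ℕ → Set (Ω × ℝ≥0)} (hf : ∀ k, SusSet (f k)) :
    SusSet (⋃ k, f k) := by
  choose u hu hSus using hf
  classical
  refine ⟨fun s => match s with | [] => univ | k :: t => u k t, ⟨?_, ?_, rfl⟩, ?_⟩
  · intro s
    cases s with
    | nil => exact Pav.univ
    | cons k t => exact (hu k).1 t
  · intro s k
    cases s with
    | nil => exact fun x hx => trivial
    | cons k' t => exact (hu k').2.1 t k
  · ext x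
    simp only [Sus, mem_iUnion, mem_iInter]
    constructor
    · rintro ⟨k, hk⟩
      rw [hSus k] at hk
      rcases mem_iUnion.1 hk with ⟨τ, hτ⟩
      have hτ' := mem_iInter.1 hτ
      refine ⟨fun n => Nat.casesOn n k τ, fun n => ?_⟩
      cases n with
      | zero => exact mem_univ x
      | succ m =>
          rw [pre_succ']
          exact hτ' m
    · rintro ⟨σ, hσ⟩
      refine ⟨σ 0, ?_⟩
      rw [hSus (σ 0)]
      refine mem_iUnion.2 ⟨σ ∘ Nat.succ, mem_iInter.2 fun n => ?_⟩
      have := hσ (n + 1)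
      rwa [pre_succ'] at this

lemma pre_getD (σ : ℕ → ℕ) {j m : ℕ} (h : j < m) : (pre σ m).getD j 0 = σ j := by
  rw [List.getD_eq_getElem _ _ (by simpa [pre_length] using h)]
  simp [pre]

lemma susSet_iInter {f : ℕ → Set (Ω × ℝ≥0)} (hf : ∀ k, SusSet (f k)) :
    SusSet (⋂ k, f k) := by
  choose u hu hSus using hf
  classical
  set word : ℕ → ℕ → List ℕ → List ℕ :=
    fun k n s => (List.range n).map (fun i => s.getD (Nat.pair k i) 0) with hword
  set cond : ℕ → ℕ → List ℕ → Prop :=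
    fun k n s => 1 ≤ n ∧ ∀ i < n, Nat.pair k i < s.length with hcond
  set w : List ℕ → Set (Ω × ℝ≥0) :=
    fun s => ⋂ k, ⋂ n, ⋂ (_ : cond k n s), u k (word k n s) with hw
  have hwmem : ∀ (s : List ℕ) (x : Ω × ℝ≥0),
      x ∈ w s ↔ ∀ k n, cond k n s → x ∈ u k (word k n s) := by
    intro s x
    rw [hw]
    simp only [mem_iInter]
  have hbound : ∀ k n (s : List ℕ), cond k n s → k < s.length ∧ n < s.length + 1 := by
    intro k n s ⟨h1, h2⟩
    constructor
    · exact lt_of_le_of_lt (Nat.left_le_pair k 0) (h2 0 h1)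
    · have := h2 (n - 1) (by omega)
      have := Nat.right_le_pair k (n - 1)
      omega
  refine ⟨w, ⟨?_, ?_, ?_⟩, ?_⟩
  · -- paving
    intro s
    have : w s = ⋂ p ∈ (Finset.range s.length ×ˢ Finset.range (s.length + 1)),
        (if cond p.1 p.2 s then u p.1 (word p.1 p.2 s) else univ) := by
      ext x
      simp only [hwmem, mem_iInter, Finset.mem_product, Finset.mem_range]
      constructor
      · intro h p hp
        split_ifs with hc
        · exact h p.1 p.2 hc
        · trivial
      · intro h k n hc
        have hb := hbound k n s hc
        have := h (k, n) ⟨hb.1, hb.2⟩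
        rwa [if_pos hc] at this
    rw [this]
    refine Pav.biInter_finset _ fun p _ => ?_
    split_ifs
    · exact (hu p.1).1 _
    · exact Pav.univ
  · -- monotone
    intro s k₀ x hx
    rw [hwmem] at hx ⊢
    intro k n hc
    have hc' : cond k n (s ++ [k₀]) := by
      refine ⟨hc.1, fun i hi => ?_⟩
      have := hc.2 i hi
      simp only [List.length_append, List.length_singleton]
      omega
    have hw' : word k n (s ++ [k₀]) = word k n s := by
      simp only [hword]
      refine List.map_congr_left fun i hi => ?_
      exact List.getD_append _ _ _ _ (hc.2 i (List.mem_range.1 hi))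
    have := hx k n hc'
    rwa [hw'] at this
  · -- root
    ext x
    simp only [hwmem, mem_univ, iff_true]
    intro k n hc
    exact absurd (hc.2 0 hc.1) (by simp)
  · -- Sus w = ⋂ f k
    ext x
    simp only [Sus, mem_iUnion, mem_iInter]
    constructor
    · intro hx
      have hx' : ∀ k, ∃ τ : ℕ → ℕ, ∀ n, x ∈ u k (pre τ n) := by
        intro k
        have := hx k
        rw [hSus k] at this
        rcases mem_iUnion.1 this with ⟨τ, hτ⟩
        exact ⟨τ, fun n => mem_iInter.1 hτ n⟩
      choose τ hτ using hx'
      refine ⟨fun m => τ (Nat.unpair m).1 (Nat.unpair m).2, fun m => ?_⟩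
      rw [hwmem]
      intro k n hc
      have hwd : word k n (pre (fun m => τ (Nat.unpair m).1 (Nat.unpair m).2) m)
          = pre (τ k) n := by
        simp only [hword]
        rw [show pre (τ k) n = (List.range n).map (τ k) from rfl]
        refine List.map_congr_left fun i hi => ?_
        rw [pre_getD _ (show Nat.pair k i < m by
          simpa [pre_length] using hc.2 i (List.mem_range.1 hi))]
        simp [Nat.unpair_pair]
      rw [hwd]
      exact hτ k n
    · rintro ⟨σ, hσ⟩ k
      rw [hSus k]
      refine mem_iUnion.2 ⟨fun i => σ (Nat.pair k i), mem_iInter.2 fun n => ?_⟩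
      cases Nat.eq_zero_or_pos n with
      | inl h =>
          rw [h, pre_zero, (hu k).2.2]
          trivial
      | inr hn =>
          have hb := hσ (Nat.pair k n)
          rw [hwmem] at hb
          have hc : cond k n (pre σ (Nat.pair k n)) := by
            refine ⟨hn, fun i hi => ?_⟩
            rw [pre_length]
            exact Nat.pair_lt_pair_right k hi
          have hwd : word k n (pre σ (Nat.pair k n)) = pre (fun i => σ (Nat.pair k i)) n := by
            simp only [hword]
            rw [show pre (fun i => σ (Nat.pair k i)) n
              = (List.range n).map (fun i => σ (Nat.pair k i)) from rfl]
            refine List.map_congr_left fun i hi => ?_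
            exact pre_getD σ (Nat.pair_lt_pair_right k (List.mem_range.1 hi))

          have := hb k n hc
          rwa [hwd] at this

lemma susSet_union {S T : Set (Ω × ℝ≥0)} (hS : SusSet S) (hT : SusSet T) :
    SusSet (S ∪ T) := by
  classical
  have : S ∪ T = ⋃ k : ℕ, (if k = 0 then S else T) := by
    ext x
    simp only [mem_union, mem_iUnion]
    constructor
    · rintro (h | h)
      · exact ⟨0, by simpa⟩
      · exact ⟨1, by simpa⟩
    · rintro ⟨k, hk⟩
      split_ifs at hk
      · exact Or.inl hk
      · exact Or.inr hk
  rw [this]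
  exact susSet_iUnion fun k => by split_ifs <;> assumption

lemma susSet_inter {S T : Set (Ω × ℝ≥0)} (hS : SusSet S) (hT : SusSet T) :
    SusSet (S ∩ T) := by
  classical
  have : S ∩ T = ⋂ k : ℕ, (if k = 0 then S else T) := by
    ext x
    simp only [mem_inter_iff, mem_iInter]
    constructor
    · rintro ⟨h1, h2⟩ k
      split_ifs <;> assumption
    · intro h
      have h0 := h 0
      have h1 := h 1
      simp at h0 h1
      exact ⟨h0, h1⟩
  rw [this]
  exact susSet_iInter fun k => by split_ifs <;> assumption

end Paving

section Proj

variable {Ω : Type*} [MeasurableSpace Ω]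

/-- Sets such that both they and their complements are Suslin over the paving. -/
def BiSus (S : Set (Ω × ℝ≥0)) : Prop := SusSet S ∧ SusSet Sᶜ

lemma biSus_empty : BiSus (∅ : Set (Ω × ℝ≥0)) :=
  ⟨susSet_empty, by rw [compl_empty]; exact susSet_univ⟩

lemma biSus_compl {S : Set (Ω × ℝ≥0)} (h : BiSus S) : BiSus Sᶜ :=
  ⟨h.2, by rw [compl_compl]; exact h.1⟩

lemma biSus_iUnion {f : ℕ → Set (Ω × ℝ≥0)} (hf : ∀ k, BiSus (f k)) :
    BiSus (⋃ k, f k) :=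
  ⟨susSet_iUnion fun k => (hf k).1, by
    rw [compl_iUnion]; exact susSet_iInter fun k => (hf k).2⟩

lemma iio_eq (a : ℝ≥0) :
    Iio a = ⋃ q : ℚ, (if Real.toNNReal q < a then Icc 0 (Real.toNNReal q) else ∅) := by
  ext x
  simp only [mem_Iio, mem_iUnion]
  constructor
  · intro hx
    obtain ⟨q, hq1, hq2⟩ := exists_rat_btwn (NNReal.coe_lt_coe.2 hx)
    refine ⟨q, ?_⟩
    have h1 : x < Real.toNNReal q := Real.lt_toNNReal_iff_coe_lt.2 hq1
    have h2 : Real.toNNReal q < a := by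
      rw [← Real.toNNReal_coe (r := a)]
      exact (Real.toNNReal_lt_toNNReal_iff (lt_of_le_of_lt (NNReal.coe_nonneg x)
        (lt_trans hq1 hq2))).2 hq2
    rw [if_pos h2]
    exact ⟨(zero_le : 0 ≤ x), le_of_lt h1⟩
  · rintro ⟨q, hq⟩
    split_ifs at hq with h
    · exact lt_of_le_of_lt hq.2 h
    · exact absurd hq (notMem_empty x)

lemma ici_eq (a : ℝ≥0) : Ici a = ⋃ n : ℕ, Icc a (a + n) := by
  ext x
  simp only [mem_Ici, mem_iUnion, mem_Icc]
  constructor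
  · intro hx
    obtain ⟨n, hn⟩ := exists_nat_ge x
    exact ⟨n, hx, le_trans hn le_add_self⟩
  · rintro ⟨n, hn, _⟩
    exact hn

lemma susSet_prod_compact {A : Set Ω} (hA : MeasurableSet A) {C : Set ℝ≥0}
    (hC : IsCompact C) : SusSet (A ×ˢ C) :=
  SusSet.of_pav ⟨A, C, hA, hC.isClosed, Or.inl hC, rfl⟩

lemma susSet_prod_univ {A : Set Ω} (hA : MeasurableSet A) : SusSet (A ×ˢ (univ : Set ℝ≥0)) :=
  SusSet.of_pav ⟨A, univ, hA, isClosed_univ, Or.inr rfl, rfl⟩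

/-- A countable union indexed by `ℚ` of Suslin sets is Suslin. -/
lemma susSet_iUnion_rat {f : ℚ → Set (Ω × ℝ≥0)} (hf : ∀ q, SusSet (f q)) :
    SusSet (⋃ q : ℚ, f q) := by
  rw [← Encodable.iUnion_decode₂ f]
  refine susSet_iUnion fun i => ?_
  rcases h : Encodable.decode₂ ℚ i with _ | q
  · simpa using susSet_empty
  · simpa using hf q

lemma biSus_prod {A : Set Ω} (hA : MeasurableSet A) {B : Set ℝ≥0}
    (hB : MeasurableSet B) : BiSus (A ×ˢ B) := by
  classical
  let M' : MeasurableSpace ℝ≥0 :=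
    { MeasurableSet' := fun B => ∀ A : Set Ω, MeasurableSet A → BiSus (A ×ˢ B)
      measurableSet_empty := by
        intro A hA
        rw [prod_empty]
        exact biSus_empty
      measurableSet_compl := by
        intro B hB A hA
        constructor
        · have h1 : A ×ˢ Bᶜ = (A ×ˢ (univ : Set ℝ≥0)) ∩ (A ×ˢ B)ᶜ := by
            ext p; simp [and_comm]; tauto
          rw [h1]
          exact susSet_inter (susSet_prod_univ hA) (hB A hA).2
        · have h2 : (A ×ˢ Bᶜ)ᶜ = (A ×ˢ B) ∪ (Aᶜ ×ˢ (univ : Set ℝ≥0)) := by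
            ext p; simp; tauto
          rw [h2]
          exact susSet_union (hB A hA).1 (susSet_prod_univ hA.compl)
      measurableSet_iUnion := by
        intro g hg A hA
        rw [prod_iUnion]
        exact biSus_iUnion fun k => hg k A hA }
  have hle : (NNReal.measurableSpace : MeasurableSpace ℝ≥0) ≤ M' := by
    rw [show (NNReal.measurableSpace : MeasurableSpace ℝ≥0) = borel ℝ≥0 from
      BorelSpace.measurable_eq, borel_eq_generateFrom_Iio]
    refine MeasurableSpace.generateFrom_le ?_
    rintro _ ⟨a, rfl⟩
    intro A hA
    constructor
    · rw [iio_eq a, prod_iUnion]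
      refine susSet_iUnion_rat fun q => ?_
      split_ifs
      · exact susSet_prod_compact hA isCompact_Icc
      · rw [prod_empty]; exact susSet_empty
    · have h2 : (A ×ˢ Iio a)ᶜ = (Aᶜ ×ˢ (univ : Set ℝ≥0)) ∪ (A ×ˢ Ici a) := by
        ext p; simp [not_lt]; tauto
      rw [h2, ici_eq a, prod_iUnion]
      exact susSet_union (susSet_prod_univ hA.compl)
        (susSet_iUnion fun n => susSet_prod_compact hA isCompact_Icc)
  exact hle B hB A hA

theorem susSet_of_measurableSet {S : Set (Ω × ℝ≥0)} (hS : MeasurableSet S) : SusSet S := by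
  let M : MeasurableSpace (Ω × ℝ≥0) :=
    { MeasurableSet' := BiSus
      measurableSet_empty := biSus_empty
      measurableSet_compl := fun S hS => biSus_compl hS
      measurableSet_iUnion := fun f hf => biSus_iUnion hf }
  have hle : (Prod.instMeasurableSpace : MeasurableSpace (Ω × ℝ≥0)) ≤ M := by
    rw [← generateFrom_prod]
    refine MeasurableSpace.generateFrom_le ?_
    rintro _ ⟨A, hA, B, hB, rfl⟩
    exact biSus_prod hA hB
  exact (hle S hS).1

/-- The measurable projection theorem. -/
theorem measurableSet_proj (Pm : Measure Ω) [IsFiniteMeasure Pm] [Pm.IsComplete]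
    {S : Set (Ω × ℝ≥0)} (hS : MeasurableSet S) :
    MeasurableSet {ω | ∃ x : ℝ≥0, (ω, x) ∈ S} := by
  obtain ⟨u, ⟨hPav, hmono, hroot⟩, rfl⟩ := susSet_of_measurableSet hS
  have himg : {ω | ∃ x, (ω, x) ∈ Sus u} = Sus (fun s => Prod.fst '' u s) := by
    ext ω
    simp only [mem_setOf_eq, Sus, mem_iUnion, mem_iInter]
    constructor
    · rintro ⟨x, σ, hσ⟩
      exact ⟨σ, fun n => ⟨(ω, x), hσ n, rfl⟩⟩
    · rintro ⟨σ, hσ⟩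
      -- extract rectangle data
      set A : ℕ → Set Ω := fun n => Classical.choose (hPav (pre σ n)) with hA
      have hspec : ∀ n, ∃ C, MeasurableSet (A n) ∧ IsClosed C ∧ (IsCompact C ∨ C = univ) ∧
          u (pre σ n) = A n ×ˢ C := fun n => Classical.choose_spec (hPav (pre σ n))
      set C : ℕ → Set ℝ≥0 := fun n => Classical.choose (hspec n) with hC
      have hspec' : ∀ n, IsClosed (C n) ∧ (IsCompact (C n) ∨ C n = univ) ∧
          u (pre σ n) = A n ×ˢ C n := fun n =>
        ⟨(Classical.choose_spec (hspec n)).2.1, (Classical.choose_spec (hspec n)).2.2.1,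
          (Classical.choose_spec (hspec n)).2.2.2⟩
      have hrect : ∀ n, u (pre σ n) = A n ×ˢ C n := fun n => (hspec' n).2.2
      have hmem : ∀ n, ω ∈ A n ∧ (C n).Nonempty := by
        intro n
        obtain ⟨p, hp, hfst⟩ := hσ n
        rw [hrect n] at hp
        exact ⟨by rw [← hfst]; exact hp.1, ⟨p.2, hp.2⟩⟩
      have hdec : ∀ n, C (n + 1) ⊆ C n := by
        intro n c hc
        have hp : (ω, c) ∈ u (pre σ (n + 1)) := by
          rw [hrect (n + 1)]
          exact ⟨(hmem (n + 1)).1, hc⟩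
        have : (ω, c) ∈ u (pre σ n) := by
          rw [pre_succ] at hp
          exact hmono _ _ hp
        rw [hrect n] at this
        exact this.2
      have hanti : ∀ m n, m ≤ n → C n ⊆ C m := by
        intro m n hmn
        induction n with
        | zero => rw [Nat.le_zero.1 hmn]
        | succ p ih =>
            rcases Nat.lt_or_ge m (p + 1) with h | h
            · exact (hdec p).trans (ih (by omega))
            · rw [Nat.le_antisymm hmn h]
      have hnon : (⋂ n, C n).Nonempty := by
        by_cases hall : ∀ n, C n = univ
        · refine ⟨0, mem_iInter.2 fun n => ?_⟩
          rw [hall n]; trivial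
        · push_neg at hall
          obtain ⟨n₀, hn₀⟩ := hall
          have hcpt : IsCompact (C n₀) := ((hspec' n₀).2.1).resolve_right hn₀
          have := IsCompact.nonempty_iInter_of_sequence_nonempty_isCompact_isClosed
            (fun m => C (n₀ + m)) (fun m => hdec (n₀ + m))
            (fun m => (hmem (n₀ + m)).2) (by simpa using hcpt)
            (fun m => (hspec' (n₀ + m)).1)
          obtain ⟨x, hx⟩ := this
          refine ⟨x, mem_iInter.2 fun n => ?_⟩
          rcases Nat.lt_or_ge n n₀ with h | h
          · exact hanti n n₀ (le_of_lt h) (by simpa using mem_iInter.1 hx 0)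
          · have := mem_iInter.1 hx (n - n₀)
            rwa [Nat.add_sub_cancel' h] at this
      obtain ⟨x, hx⟩ := hnon
      refine ⟨x, σ, fun n => ?_⟩
      rw [hrect n]
      exact ⟨(hmem n).1, mem_iInter.1 hx n⟩
  rw [himg]
  refine measurableSet_sus (Pm := Pm) (fun s => ?_) (fun s k => image_mono (hmono s k))
  obtain ⟨A, C, hA, hC, _, heq⟩ := hPav s
  rw [heq]
  rcases eq_empty_or_nonempty C with h | h
  · rw [h, prod_empty, image_empty]
    exact MeasurableSet.empty
  · rw [fst_image_prod _ h]
    exact hA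

end Proj

section Until

variable {Ω : Type*} [MeasurableSpace Ω]

/-- `ω`-wise infimum of the section of `S`. -/
noncomputable def infS (S : Set (Ω × ℝ≥0)) (ω : Ω) : ℝ≥0∞ :=
  ⨅ (x : ℝ≥0) (_ : (ω, x) ∈ S), (x : ℝ≥0∞)

/-- `ω`-wise supremum of the section of `S`. -/
noncomputable def supS (S : Set (Ω × ℝ≥0)) (ω : Ω) : ℝ≥0∞ :=
  ⨆ (x : ℝ≥0) (_ : (ω, x) ∈ S), (x : ℝ≥0∞)

lemma measurable_infS (Pm : Measure Ω) [IsFiniteMeasure Pm] [Pm.IsComplete] {S : Set (Ω × ℝ≥0)} (hS : MeasurableSet S) :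
    Measurable (infS S) := by
  apply measurable_of_Iio
  intro c
  have h : infS S ⁻¹' (Iio c) = {ω | ∃ x : ℝ≥0, (ω, x) ∈ S ∩ {p | ((p.2 : ℝ≥0∞)) < c}} := by
    ext ω
    simp only [mem_preimage, mem_Iio, infS, mem_setOf_eq, mem_inter_iff, iInf_lt_iff]
    tauto
  rw [h]
  exact measurableSet_proj Pm (hS.inter (measurableSet_lt
    (measurable_coe_nnreal_ennreal.comp measurable_snd) measurable_const))

lemma measurable_supS (Pm : Measure Ω) [IsFiniteMeasure Pm] [Pm.IsComplete] {S : Set (Ω × ℝ≥0)} (hS : MeasurableSet S) :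
    Measurable (supS S) := by
  apply measurable_of_Ioi
  intro c
  have h : supS S ⁻¹' (Ioi c) = {ω | ∃ x : ℝ≥0, (ω, x) ∈ S ∩ {p | c < ((p.2 : ℝ≥0∞))}} := by
    ext ω
    simp only [mem_preimage, mem_Ioi, supS, mem_setOf_eq, mem_inter_iff, lt_iSup_iff]
    tauto
  rw [h]
  exact measurableSet_proj Pm (hS.inter (measurableSet_lt
    measurable_const (measurable_coe_nnreal_ennreal.comp measurable_snd)))

lemma exists_rat_btwn_nnreal {x y : ℝ≥0} (h : x < y) :
    ∃ r : ℚ, x < Real.toNNReal r ∧ Real.toNNReal r < y := by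
  obtain ⟨r, hr1, hr2⟩ := exists_rat_btwn (NNReal.coe_lt_coe.2 h)
  refine ⟨r, Real.lt_toNNReal_iff_coe_lt.2 hr1, ?_⟩
  rw [← Real.toNNReal_coe (r := y)]
  exact (Real.toNNReal_lt_toNNReal_iff
    (lt_of_le_of_lt (NNReal.coe_nonneg x) (lt_trans hr1 hr2))).2 hr2

section UntilParams

variable {Φ Ψ : Set (Ω × ℝ≥0)}

/-- Sup of the bad times of `Φ` before `q`. -/
noncomputable def mq (Φ : Set (Ω × ℝ≥0)) (q : ℝ≥0) : Ω → ℝ≥0∞ :=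
  supS (Φᶜ ∩ {p | p.2 < q})

/-- Inf of the bad times of `Φ` after `q`. -/
noncomputable def nq (Φ : Set (Ω × ℝ≥0)) (q : ℝ≥0) : Ω → ℝ≥0∞ :=
  infS (Φᶜ ∩ {p | q ≤ p.2})

/-- `Φ` holds throughout `[t, q)`. -/
def Gq (Φ : Set (Ω × ℝ≥0)) (q : ℝ≥0) : Set (Ω × ℝ≥0) :=
  {p | p.2 < q ∧ mq Φ q p.1 ≤ (p.2 : ℝ≥0∞) ∧ p ∉ (Φᶜ ∩ {p' : Ω × ℝ≥0 | p'.2 < q})}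

/-- Good witness times after `q` : `Φ` holds on `[q, u)` and `Ψ` holds at `u`. -/
def Aq (Φ Ψ : Set (Ω × ℝ≥0)) (q : ℝ≥0) : Set (Ω × ℝ≥0) :=
  {p | q < p.2 ∧ ((p.2 : ℝ≥0∞)) ≤ nq Φ q p.1 ∧ p ∈ Ψ}

lemma charn {q u : ℝ≥0} {ω : Ω} (hqu : q ≤ u) :
    (∀ s' : ℝ≥0, q ≤ s' → s' < u → (ω, s') ∈ Φ) ↔ (u : ℝ≥0∞) ≤ nq Φ q ω := by
  constructor
  · intro h
    refine le_iInf fun x => le_iInf fun hx => ?_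
    rw [ENNReal.coe_le_coe]
    by_contra hc
    push_neg at hc
    exact hx.1 (h x hx.2 hc)
  · intro h s' hqs' hs'u
    by_contra hmem
    have h1 : nq Φ q ω ≤ (s' : ℝ≥0∞) :=
      iInf_le_of_le s' (iInf_le_of_le ⟨hmem, hqs'⟩ le_rfl)
    have h2 : (s' : ℝ≥0∞) < (u : ℝ≥0∞) := ENNReal.coe_lt_coe.2 hs'u
    exact absurd (lt_of_le_of_lt (le_trans h h1) h2) (lt_irrefl _)

lemma charG {q : ℝ≥0} {ω : Ω} {t : ℝ≥0} :
    (ω, t) ∈ Gq Φ q ↔ (t < q ∧ ∀ s' : ℝ≥0, t ≤ s' → s' < q → (ω, s') ∈ Φ) := by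
  constructor
  · rintro ⟨htq, hsup, hnot⟩
    refine ⟨htq, fun s' hts' hs'q => ?_⟩
    by_contra hc
    have h1 : (s' : ℝ≥0∞) ≤ mq Φ q ω :=
      le_iSup_of_le s' (le_iSup_of_le ⟨hc, hs'q⟩ le_rfl)
    have h2 : (s' : ℝ≥0∞) = (t : ℝ≥0∞) :=
      le_antisymm (le_trans h1 hsup) (ENNReal.coe_le_coe.2 hts')
    rw [ENNReal.coe_inj] at h2
    exact hnot ⟨by rwa [h2] at hc, by rw [h2] at hs'q; exact hs'q⟩
  · rintro ⟨htq, h⟩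
    refine ⟨htq, ?_, fun hmem => hmem.1 (h t le_rfl htq)⟩
    refine iSup_le fun x => iSup_le fun hx => ?_
    rw [ENNReal.coe_le_coe]
    by_contra hc
    push_neg at hc
    exact hx.1 (h x (le_of_lt hc) hx.2)

end UntilParams

theorem measurableSet_until (Pm : Measure Ω) [IsFiniteMeasure Pm] [Pm.IsComplete]
    {Φ Ψ : Set (Ω × ℝ≥0)} {I : Set ℝ≥0}
    (hΦ : MeasurableSet Φ) (hΨ : MeasurableSet Ψ) (hI : I.OrdConnected) :
    MeasurableSet {p : Ω × ℝ≥0 | ∃ s ∈ I, (p.1, p.2 + s) ∈ Ψ ∧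
      ∀ s' : ℝ≥0, p.2 ≤ s' → s' < p.2 + s → (p.1, s') ∈ Φ} := by
  classical
  by_cases hIe : I = ∅
  · have : {p : Ω × ℝ≥0 | ∃ s ∈ I, (p.1, p.2 + s) ∈ Ψ ∧
        ∀ s' : ℝ≥0, p.2 ≤ s' → s' < p.2 + s → (p.1, s') ∈ Φ} = ∅ := by
      ext p; simp [hIe]
    rw [this]; exact MeasurableSet.empty
  have hIne : I.Nonempty := nonempty_iff_ne_empty.2 hIe
  set a : ℝ≥0 := sInf I with ha
  set b : ℝ≥0∞ := ⨆ s ∈ I, (s : ℝ≥0∞) with hb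
  have ha_le : ∀ s ∈ I, a ≤ s := fun s hs => csInf_le (OrderBot.bddBelow I) hs
  have hb_ge : ∀ s ∈ I, (s : ℝ≥0∞) ≤ b := fun s hs => le_biSup _ hs
  have hIn : ∀ s : ℝ≥0, a < s → (s : ℝ≥0∞) < b → s ∈ I := by
    intro s h1 h2
    obtain ⟨s₁, hs₁I, hs₁⟩ := (csInf_lt_iff (OrderBot.bddBelow I) hIne).1 h1
    have h2' : ∃ s₂ ∈ I, (s : ℝ≥0∞) < (s₂ : ℝ≥0∞) := by
      rw [hb] at h2
      simpa [lt_iSup_iff] using h2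
    obtain ⟨s₂, hs₂I, hs₂⟩ := h2'
    rw [ENNReal.coe_lt_coe] at hs₂
    exact hI.out hs₁I hs₂I ⟨le_of_lt hs₁, le_of_lt hs₂⟩
  -- measurability of auxiliary measurable functions
  have hNq : ∀ q : ℝ≥0, MeasurableSet (Φᶜ ∩ {p : Ω × ℝ≥0 | p.2 < q}) := fun q =>
    hΦ.compl.inter (measurable_snd measurableSet_Iio)
  have hmq : ∀ q : ℝ≥0, Measurable (mq Φ q) := fun q => measurable_supS Pm (hNq q)
  have hnq : ∀ q : ℝ≥0, Measurable (nq Φ q) := fun q =>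
    measurable_infS Pm (hΦ.compl.inter (measurable_snd measurableSet_Ici))
  have hGq : ∀ q : ℝ≥0, MeasurableSet (Gq Φ q) := by
    intro q
    have heq : Gq Φ q = (Prod.snd ⁻¹' Iio q ∩
        {p : Ω × ℝ≥0 | mq Φ q p.1 ≤ (p.2 : ℝ≥0∞)}) ∩ (Φᶜ ∩ {p : Ω × ℝ≥0 | p.2 < q})ᶜ := by
      ext p; simp only [Gq, mem_setOf_eq, mem_inter_iff, mem_preimage, mem_Iio, mem_compl_iff]
      tauto
    rw [heq]
    refine ((measurable_snd measurableSet_Iio).inter ?_).inter (hNq q).compl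
    exact measurableSet_le ((hmq q).comp measurable_fst)
      (measurable_coe_nnreal_ennreal.comp measurable_snd)
  have hAq : ∀ q : ℝ≥0, MeasurableSet (Aq Φ Ψ q) := by
    intro q
    have heq : Aq Φ Ψ q = (Prod.snd ⁻¹' Ioi q ∩
        {p : Ω × ℝ≥0 | (p.2 : ℝ≥0∞) ≤ nq Φ q p.1}) ∩ Ψ := by
      ext p; simp only [Aq, mem_setOf_eq, mem_inter_iff, mem_preimage, mem_Ioi]
      tauto
    rw [heq]
    refine ((measurable_snd measurableSet_Ioi).inter ?_).inter hΨ
    exact measurableSet_le (measurable_coe_nnreal_ennreal.comp measurable_snd)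
      ((hnq q).comp measurable_fst)
  have hiq : ∀ q r : ℝ≥0, Measurable (infS (Aq Φ Ψ q ∩ {p : Ω × ℝ≥0 | r ≤ p.2})) :=
    fun q r => measurable_infS Pm ((hAq q).inter (measurable_snd measurableSet_Ici))
  -- the pieces
  set T₀ : Set (Ω × ℝ≥0) := if 0 ∈ I then Ψ else ∅ with hT₀
  set E2 : ℝ≥0 → Set (Ω × ℝ≥0) := fun q =>
    if a ∈ I then (fun p : Ω × ℝ≥0 => (p.1, p.2 + a)) ⁻¹' Aq Φ Ψ q else ∅ with hE2
  set b' : ℝ≥0 := if h : ∃ s ∈ I, (s : ℝ≥0∞) = b then h.choose else 0 with hb'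
  set E3 : ℝ≥0 → Set (Ω × ℝ≥0) := fun q =>
    if ∃ s ∈ I, (s : ℝ≥0∞) = b then (fun p : Ω × ℝ≥0 => (p.1, p.2 + b')) ⁻¹' Aq Φ Ψ q
    else ∅ with hE3
  set E1 : ℝ≥0 → Set (Ω × ℝ≥0) := fun q =>
    ⋃ r : ℚ, ({p : Ω × ℝ≥0 | p.2 + a < Real.toNNReal r} ∩
      {p : Ω × ℝ≥0 | infS (Aq Φ Ψ q ∩ {p' : Ω × ℝ≥0 | Real.toNNReal r ≤ p'.2}) p.1
        < (p.2 : ℝ≥0∞) + b}) with hE1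
  have hsplit : {p : Ω × ℝ≥0 | ∃ s ∈ I, (p.1, p.2 + s) ∈ Ψ ∧
      ∀ s' : ℝ≥0, p.2 ≤ s' → s' < p.2 + s → (p.1, s') ∈ Φ}
      = T₀ ∪ ⋃ r : ℚ, (Gq Φ (Real.toNNReal r) ∩
          (E2 (Real.toNNReal r) ∪ E3 (Real.toNNReal r) ∪ E1 (Real.toNNReal r))) := by
    ext ⟨ω, t⟩
    simp only [mem_setOf_eq, mem_union, mem_iUnion]
    constructor
    · rintro ⟨s, hsI, hΨ', hΦ'⟩
      rcases eq_or_ne s 0 with hs0 | hs0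
      · left
        rw [hT₀, if_pos (hs0 ▸ hsI)]
        rw [hs0, add_zero] at hΨ'
        exact hΨ'
      · right
        have hts : t < t + s := lt_add_of_pos_right t ((zero_le : 0 ≤ s).lt_of_ne (Ne.symm hs0))
        obtain ⟨r, hr1, hr2⟩ := exists_rat_btwn_nnreal hts
        set q : ℝ≥0 := Real.toNNReal r
        refine ⟨r, ?_, ?_⟩
        · rw [charG]
          exact ⟨hr1, fun s' hts' hs'q => hΦ' s' hts' (lt_trans hs'q hr2)⟩
        · have hAu : (ω, t + s) ∈ Aq Φ Ψ q := by
            refine ⟨hr2, ?_, hΨ'⟩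
            rw [← charn (le_of_lt hr2)]
            exact fun s' hqs' hs'u => hΦ' s' (le_trans (le_of_lt hr1) hqs') hs'u
          rcases eq_or_ne s a with hsa | hsa
          · left; left
            simp only [hE2]
            split_ifs with haI
            · show (ω, t + a) ∈ Aq Φ Ψ q
              rwa [← hsa]
            · exact absurd (hsa ▸ hsI) haI
          rcases eq_or_ne ((s : ℝ≥0∞)) b with hsb | hsb
          · left; right
            have hex : ∃ s ∈ I, (s : ℝ≥0∞) = b := ⟨s, hsI, hsb⟩
            simp only [hE3]
            split_ifs with hex'
            · have h2 : b' = hex.choose := by rw [hb']; exact dif_pos hex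
              have h3 : ((hex.choose : ℝ≥0) : ℝ≥0∞) = (s : ℝ≥0∞) :=
                hex.choose_spec.2.trans hsb.symm
              have hbs : b' = s := h2.trans (ENNReal.coe_inj.1 h3)
              show (ω, t + b') ∈ Aq Φ Ψ q
              rwa [hbs]
          · right
            have has : a < s := lt_of_le_of_ne (ha_le s hsI) (Ne.symm hsa)
            have hsb' : (s : ℝ≥0∞) < b := lt_of_le_of_ne (hb_ge s hsI) hsb
            have h1 : t + a < t + s := add_lt_add_right has t
            obtain ⟨r', hr'1, hr'2⟩ := exists_rat_btwn_nnreal h1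
            simp only [hE1]
            refine mem_iUnion.2 ⟨r', hr'1, ?_⟩
            have hle : infS (Aq Φ Ψ q ∩ {p' : Ω × ℝ≥0 | Real.toNNReal r' ≤ p'.2}) ω
                ≤ ((t + s : ℝ≥0) : ℝ≥0∞) :=
              iInf_le_of_le (t + s) (iInf_le_of_le ⟨hAu, le_of_lt hr'2⟩ le_rfl)
            refine lt_of_le_of_lt hle ?_
            rw [ENNReal.coe_add]
            exact ENNReal.add_lt_add_left ENNReal.coe_ne_top hsb'
    · rintro (h0 | ⟨r, hG, hrest⟩)
      · rw [hT₀] at h0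
        split_ifs at h0 with h0I
        · refine ⟨0, h0I, by rwa [add_zero], fun s' hts' hs't => ?_⟩
          rw [add_zero] at hs't
          exact absurd hts' (not_le.2 hs't)
        · exact absurd h0 (notMem_empty _)
      · set q : ℝ≥0 := Real.toNNReal r
        rw [charG] at hG
        obtain ⟨htq, hφtq⟩ := hG
        -- common argument given a witness u
        have key : ∀ u : ℝ≥0, (ω, u) ∈ Aq Φ Ψ q → (u - t) ∈ I →
            ∃ s ∈ I, (ω, t + s) ∈ Ψ ∧
              ∀ s' : ℝ≥0, t ≤ s' → s' < t + s → (ω, s') ∈ Φ := by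
          rintro u ⟨hqu, hun, huΨ⟩ hmem
          have htu : t ≤ u := le_of_lt (lt_trans htq hqu)
          have htsu : t + (u - t) = u := add_tsub_cancel_of_le htu
          refine ⟨u - t, hmem, by rwa [htsu], fun s' hts' hs'u => ?_⟩
          rw [htsu] at hs'u
          rcases lt_or_ge s' q with h | h
          · exact hφtq s' hts' h
          · exact (charn (le_of_lt hqu)).2 hun s' h hs'u
        rcases hrest with ((h2 | h3) | h1)
        · simp only [hE2] at h2
          split_ifs at h2 with haI
          · refine key (t + a) h2 ?_
            rwa [add_tsub_cancel_left]
          · exact absurd h2 (notMem_empty _)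
        · simp only [hE3] at h3
          split_ifs at h3 with hbI
          · refine key (t + b') h3 ?_
            rw [add_tsub_cancel_left]
            rw [hb', dif_pos hbI]
            exact hbI.choose_spec.1
          · exact absurd h3 (notMem_empty _)
        · simp only [hE1] at h1
          obtain ⟨r', hr'lt, hinf⟩ := mem_iUnion.1 h1
          simp only [mem_setOf_eq] at hr'lt hinf
          rw [infS] at hinf
          rw [iInf_lt_iff] at hinf
          obtain ⟨u, hu⟩ := hinf
          rw [iInf_lt_iff] at hu
          obtain ⟨⟨huA, hru⟩, hub⟩ := hu
          refine key u huA ?_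
          have htau : t + a < u := lt_of_lt_of_le hr'lt hru
          have htu : t < u := lt_of_le_of_lt (le_add_right le_rfl) htau
          have htsu : t + (u - t) = u := add_tsub_cancel_of_le (le_of_lt htu)
          refine hIn _ ?_ ?_
          · have := htau
            rw [← htsu] at this
            exact lt_of_add_lt_add_left this
          · have hco : ((u : ℝ≥0∞)) < (t : ℝ≥0∞) + b := hub
            rw [← htsu, ENNReal.coe_add] at hco
            exact (ENNReal.add_lt_add_iff_left ENNReal.coe_ne_top).1 hco
  rw [hsplit]
  refine MeasurableSet.union ?_ (MeasurableSet.iUnion fun r => ?_)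
  · rw [hT₀]; split_ifs
    · exact hΨ
    · exact MeasurableSet.empty
  · refine (hGq _).inter (MeasurableSet.union (MeasurableSet.union ?_ ?_) ?_)
    · simp only [hE2]; split_ifs
      · exact (measurable_fst.prodMk (measurable_snd.add_const a)) (hAq _)
      · exact MeasurableSet.empty
    · simp only [hE3]; split_ifs
      · exact (measurable_fst.prodMk (measurable_snd.add_const b')) (hAq _)
      · exact MeasurableSet.empty
    · simp only [hE1]
      refine MeasurableSet.iUnion fun r' => MeasurableSet.inter ?_ ?_
      · exact measurableSet_lt (measurable_snd.add_const a) measurable_const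
      · exact measurableSet_lt ((hiq _ _).comp measurable_fst)
          ((measurable_coe_nnreal_ennreal.comp measurable_snd).add_const b)

end Until

end StmtAux

/-- on a complete probability space, if `(ω,t) ↦ X_t(ω)` is jointly measurable
(with `E` a topological space with its Borel σ-algebra) and each atomic proposition is
interpreted by a Borel set, then for every MTL formula `φ`, the satisfaction set
`⟦φ⟧ = {(ω,t) : X(ω),t ⊨ φ}` is product-measurable, and each section
`⟦φ⟧(t) = {ω : X(ω),t ⊨ φ}` is `F`-measurable. -/
theorem stmt_4 {Ω E AP : Type*} [MeasurableSpace Ω] [TopologicalSpace E] [MeasurableSpace E]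
    [BorelSpace E] [Finite AP] (P : Measure Ω) [IsProbabilityMeasure P] [P.IsComplete]
    (X : ℝ≥0 → Ω → E) (hX : Measurable fun p : Ω × ℝ≥0 => X p.2 p.1)
    (V : AP → Set E) (hV : ∀ a, MeasurableSet (V a))
    (φ : MTL AP) (hφ : φ.intervalsOK) :
    MeasurableSet {p : Ω × ℝ≥0 | φ.Sat X V p.1 p.2} ∧
      ∀ t : ℝ≥0, MeasurableSet {ω | φ.Sat X V ω t} := by
  have key : ∀ (ψ : MTL AP), ψ.intervalsOK →
      MeasurableSet {p : Ω × ℝ≥0 | ψ.Sat X V p.1 p.2} := by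
    intro ψ
    induction ψ with
    | atom a => intro _; exact hX (hV a)
    | not ψ ih =>
        intro h
        have hset : {p : Ω × ℝ≥0 | (MTL.not ψ).Sat X V p.1 p.2}
            = {p : Ω × ℝ≥0 | ψ.Sat X V p.1 p.2}ᶜ := rfl
        rw [hset]
        exact (ih h).compl
    | and ψ₁ ψ₂ ih1 ih2 =>
        intro h
        have hset : {p : Ω × ℝ≥0 | (MTL.and ψ₁ ψ₂).Sat X V p.1 p.2}
            = {p : Ω × ℝ≥0 | ψ₁.Sat X V p.1 p.2} ∩ {p : Ω × ℝ≥0 | ψ₂.Sat X V p.1 p.2} := rfl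
        rw [hset]
        exact (ih1 h.1).inter (ih2 h.2)
    | untl ψ₁ ψ₂ I ih1 ih2 =>
        intro h
        have hset : {p : Ω × ℝ≥0 | (MTL.untl ψ₁ ψ₂ I).Sat X V p.1 p.2}
            = {p : Ω × ℝ≥0 | ∃ s ∈ I, (p.1, p.2 + s) ∈ {p' : Ω × ℝ≥0 | ψ₂.Sat X V p'.1 p'.2} ∧
                ∀ s' : ℝ≥0, p.2 ≤ s' → s' < p.2 + s →
                  (p.1, s') ∈ {p' : Ω × ℝ≥0 | ψ₁.Sat X V p'.1 p'.2}} := rfl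
        rw [hset]
        exact StmtAux.measurableSet_until P (ih1 h.2.1) (ih2 h.2.2) h.1
  refine ⟨key φ hφ, fun t => ?_⟩
  exact measurable_prodMk_right (key φ hφ)
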